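/- A connected hypergraph H = (V,E) admits an Euler family if and only if its incidence graph G has a subgraph G' in which every vertex of V has even degree and every vertex of E has degree exactly 2. -/

import Mathlib

open Finset

/-- The cyclically-next index in `Fin n`. -/
def nxt {n : ℕ} (i : Fin n) : Fin n := ⟨(i.1 + 1) % n, Nat.mod_lt _ i.pos⟩

/-- A closed strict trail `v₀ e₀ v₁ e₁ … v_{n-1} e_{n-1} v₀` in the hypergraph whose
edges are given by the family `E` (indexed by `ι`, so parallel edges are allowed):
a closed walk of length `n ≥ 2` with consecutive anchor vertices distinct,
each `vᵢ, v_{i+1} ∈ eᵢ`, and pairwise distinct edges. -/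
structure CST {V ι : Type} (E : ι → Finset V) where
  n : ℕ
  hn : 2 ≤ n
  vert : Fin n → V
  edge : Fin n → ι
  mem_left : ∀ i, vert i ∈ E (edge i)
  mem_right : ∀ i, vert (nxt i) ∈ E (edge i)
  ne_next : ∀ i, vert i ≠ vert (nxt i)
  edge_inj : Function.Injective edge

/-- An Euler family: a finite family of pairwise anchor-disjoint closed strict trails
such that every edge of the hypergraph lies in exactly one trail. -/
def HasEulerFamily {V ι : Type} (E : ι → Finset V) : Prop :=
  ∃ (m : ℕ) (T : Fin m → CST E),
    (∀ e : ι, ∃ k i, (T k).edge i = e) ∧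
    (∀ k k' i i', (T k).edge i = (T k').edge i' → k = k') ∧
    (∀ k k' i i', (T k).vert i = (T k').vert i' → k = k')

/-- An Euler tour: a single closed strict trail traversing every edge (exactly once). -/
def HasEulerTour {V ι : Type} (E : ι → Finset V) : Prop :=
  ∃ T : CST E, Function.Surjective T.edge

/-- The degree of a vertex: the number of edges containing it. -/
def hdeg {V ι : Type} [Fintype ι] [DecidableEq V] (E : ι → Finset V) (v : V) : ℕ :=
  (Finset.univ.filter fun e => v ∈ E e).card

/-- The skeleton graph of the hypergraph: two distinct vertices are adjacent
iff they lie in a common edge.  Walk-connectivity in the hypergraph coincides with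
connectivity in the skeleton. -/
def skeleton {V ι : Type} (E : ι → Finset V) : SimpleGraph V where
  Adj u w := u ≠ w ∧ ∃ e, u ∈ E e ∧ w ∈ E e
  symm := ⟨fun u w h => ⟨h.1.symm, h.2.imp fun _ he => ⟨he.2, he.1⟩⟩⟩
  loopless := ⟨fun _ h => h.1 rfl⟩

/-- The number of connected components of the hypergraph. -/
noncomputable def ccCount {V ι : Type} (E : ι → Finset V) : ℕ :=
  Nat.card (skeleton E).ConnectedComponent

set_option linter.unusedSectionVars false
set_option linter.unusedVariables false
set_option maxHeartbeats 1000000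

-- basics
def prv {n : ℕ} (i : Fin n) : Fin n := ⟨(i.1 + n - 1) % n, Nat.mod_lt _ i.pos⟩

lemma nxt_prv {n : ℕ} (i : Fin n) : nxt (prv i) = i := by
  have hn := i.pos; have hi := i.isLt
  apply Fin.ext
  show ((i.1 + n - 1) % n + 1) % n = i.1
  rw [Nat.mod_add_mod, show i.1 + n - 1 + 1 = i.1 + n by omega, Nat.add_mod_right,
    Nat.mod_eq_of_lt hi]

lemma nxt_surj {n : ℕ} : Function.Surjective (nxt (n := n)) :=
  fun i => ⟨prv i, nxt_prv i⟩

lemma nxt_bij {n : ℕ} : Function.Bijective (nxt (n := n)) :=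
  Finite.surjective_iff_bijective.mp nxt_surj

lemma nxt_inj {n : ℕ} : Function.Injective (nxt (n := n)) := nxt_bij.1

def CST.pos {V ι : Type} {E : ι → Finset V} (C : CST E) : 0 < C.n := by
  have := C.hn; omega

-- rotation
def shf {n : ℕ} (i₀ k : Fin n) : Fin n := ⟨(i₀.1 + k.1) % n, Nat.mod_lt _ k.pos⟩

lemma shf_nxt {n : ℕ} (i₀ k : Fin n) : shf i₀ (nxt k) = nxt (shf i₀ k) := by
  apply Fin.ext
  show (i₀.1 + (k.1 + 1) % n) % n = ((i₀.1 + k.1) % n + 1) % n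
  rw [Nat.add_mod_mod, Nat.mod_add_mod, Nat.add_assoc]

lemma shf_surj {n : ℕ} (i₀ : Fin n) : Function.Surjective (shf i₀) := by
  intro j
  refine ⟨⟨(j.1 + n - i₀.1) % n, Nat.mod_lt _ j.pos⟩, ?_⟩
  apply Fin.ext
  show (i₀.1 + (j.1 + n - i₀.1) % n) % n = j.1
  rw [Nat.add_mod_mod, show i₀.1 + (j.1 + n - i₀.1) = j.1 + n by have := i₀.isLt; omega,
    Nat.add_mod_right, Nat.mod_eq_of_lt j.isLt]

lemma shf_bij {n : ℕ} (i₀ : Fin n) : Function.Bijective (shf i₀) :=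
  Finite.surjective_iff_bijective.mp (shf_surj i₀)

lemma shf_inj {n : ℕ} (i₀ : Fin n) : Function.Injective (shf i₀) := (shf_bij i₀).1

variable {V ι : Type} {E : ι → Finset V}

def CST.rot (C : CST E) (i₀ : Fin C.n) : CST E where
  n := C.n
  hn := C.hn
  vert k := C.vert (shf i₀ k)
  edge k := C.edge (shf i₀ k)
  mem_left k := C.mem_left _
  mem_right k := by show C.vert (shf i₀ (nxt k)) ∈ _; rw [shf_nxt]; exact C.mem_right _
  ne_next k := by show C.vert _ ≠ C.vert (shf i₀ (nxt k)); rw [shf_nxt]; exact C.ne_next _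
  edge_inj := fun k k' h => shf_inj i₀ (C.edge_inj h)

lemma rot_edge_range (C : CST E) (i₀ : Fin C.n) (e : ι) :
    (∃ k, (C.rot i₀).edge k = e) ↔ ∃ k, C.edge k = e := by
  constructor
  · rintro ⟨k, rfl⟩; exact ⟨shf i₀ k, rfl⟩
  · rintro ⟨k, rfl⟩; obtain ⟨k', hk'⟩ := shf_surj i₀ k
    exact ⟨k', by simp [CST.rot, hk']⟩

lemma rot_vert_zero (C : CST E) (i₀ : Fin C.n) :
    (C.rot i₀).vert ⟨0, C.pos⟩ = C.vert i₀ := by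
  show C.vert _ = C.vert i₀
  congr 1
  exact Fin.ext (by show (i₀.1 + 0) % C.n = i₀.1; rw [Nat.add_zero]; exact Nat.mod_eq_of_lt i₀.isLt)

def gvert (C₁ C₂ : CST E) (k : Fin (C₁.n + C₂.n)) : V :=
  if h : k.1 < C₁.n then C₁.vert ⟨k.1, h⟩
  else C₂.vert ⟨k.1 - C₁.n, by have := k.isLt; omega⟩

def gedge (C₁ C₂ : CST E) (k : Fin (C₁.n + C₂.n)) : ι :=
  if h : k.1 < C₁.n then C₁.edge ⟨k.1, h⟩
  else C₂.edge ⟨k.1 - C₁.n, by have := k.isLt; omega⟩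

lemma gvert_nxt (C₁ C₂ : CST E) (h0 : C₁.vert ⟨0, C₁.pos⟩ = C₂.vert ⟨0, C₂.pos⟩)
    (k : Fin (C₁.n + C₂.n)) :
    gvert C₁ C₂ (nxt k) =
      if h : k.1 < C₁.n then C₁.vert (nxt ⟨k.1, h⟩)
      else C₂.vert (nxt ⟨k.1 - C₁.n, by have := k.isLt; omega⟩) := by
  have h1 := C₁.pos; have h2 := C₂.pos; have hk := k.isLt
  by_cases h : k.1 < C₁.n
  · rw [dif_pos h]
    by_cases h' : k.1 + 1 < C₁.n
    · have hv : (nxt k).1 = k.1 + 1 := Nat.mod_eq_of_lt (by omega)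
      rw [gvert, dif_pos (show (nxt k).1 < C₁.n by rw [hv]; omega)]
      congr 1
      apply Fin.ext
      show (nxt k).1 = (k.1 + 1) % C₁.n
      rw [hv, Nat.mod_eq_of_lt h']
    · -- k.1 + 1 = C₁.n
      have hk1 : k.1 + 1 = C₁.n := by omega
      have hv : (nxt k).1 = C₁.n := by
        show (k.1 + 1) % (C₁.n + C₂.n) = C₁.n
        rw [hk1]; exact Nat.mod_eq_of_lt (by omega)
      rw [gvert, dif_neg (by omega)]
      have : C₂.vert ⟨(nxt k).1 - C₁.n, by have := (nxt k).isLt; omega⟩ = C₂.vert ⟨0, C₂.pos⟩ := by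
        congr 1; exact Fin.ext (by simp [hv])
      rw [this, ← h0]
      congr 1
      exact Fin.ext (by simp [nxt, hk1])
  · rw [dif_neg h]
    by_cases h' : k.1 + 1 < C₁.n + C₂.n
    · have hv : (nxt k).1 = k.1 + 1 := Nat.mod_eq_of_lt h'
      rw [gvert, dif_neg (by omega)]
      congr 1
      apply Fin.ext
      show (nxt k).1 - C₁.n = (k.1 - C₁.n + 1) % C₂.n
      rw [hv, Nat.mod_eq_of_lt (by omega)]; omega
    · have hk1 : k.1 + 1 = C₁.n + C₂.n := by omega
      have hv : (nxt k).1 = 0 := by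
        show (k.1 + 1) % (C₁.n + C₂.n) = 0
        rw [hk1, Nat.mod_self]
      rw [gvert, dif_pos (by omega : (nxt k).1 < C₁.n)]
      have e1 : C₁.vert ⟨(nxt k).1, by omega⟩ = C₁.vert ⟨0, C₁.pos⟩ := by
        congr 1; exact Fin.ext hv
      rw [e1, h0]
      congr 1
      apply Fin.ext
      show (0 : ℕ) = (k.1 - C₁.n + 1) % C₂.n
      rw [show k.1 - C₁.n + 1 = C₂.n by omega, Nat.mod_self]

def glue (C₁ C₂ : CST E) (h0 : C₁.vert ⟨0, C₁.pos⟩ = C₂.vert ⟨0, C₂.pos⟩)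
    (hd : ∀ i j, C₁.edge i ≠ C₂.edge j) : CST E where
  n := C₁.n + C₂.n
  hn := by have := C₁.hn; have := C₂.hn; omega
  vert := gvert C₁ C₂
  edge := gedge C₁ C₂
  mem_left k := by
    unfold gvert gedge
    by_cases h : k.1 < C₁.n
    · rw [dif_pos h, dif_pos h]; exact C₁.mem_left _
    · rw [dif_neg h, dif_neg h]; exact C₂.mem_left _
  mem_right k := by
    rw [gvert_nxt C₁ C₂ h0]
    unfold gedge
    by_cases h : k.1 < C₁.n
    · rw [dif_pos h, dif_pos h]; exact C₁.mem_right _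
    · rw [dif_neg h, dif_neg h]; exact C₂.mem_right _
  ne_next k := by
    rw [gvert_nxt C₁ C₂ h0]
    unfold gvert
    by_cases h : k.1 < C₁.n
    · rw [dif_pos h, dif_pos h]; exact C₁.ne_next _
    · rw [dif_neg h, dif_neg h]; exact C₂.ne_next _
  edge_inj := by
    intro k k' hkk
    unfold gedge at hkk
    by_cases h : k.1 < C₁.n <;> by_cases h' : k'.1 < C₁.n
    · rw [dif_pos h, dif_pos h'] at hkk
      have := congrArg Fin.val (C₁.edge_inj hkk)
      exact Fin.ext this
    · rw [dif_pos h, dif_neg h'] at hkk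
      exact absurd hkk (hd _ _)
    · rw [dif_neg h, dif_pos h'] at hkk
      exact absurd hkk.symm (hd _ _)
    · rw [dif_neg h, dif_neg h'] at hkk
      have := congrArg Fin.val (C₂.edge_inj hkk)
      simp only at this
      exact Fin.ext (by have := k.isLt; have := k'.isLt; omega)

lemma glue_edge_range (C₁ C₂ : CST E) (h0 : C₁.vert ⟨0, C₁.pos⟩ = C₂.vert ⟨0, C₂.pos⟩)
    (hd : ∀ i j, C₁.edge i ≠ C₂.edge j) (e : ι) :
    (∃ k, (glue C₁ C₂ h0 hd).edge k = e) ↔ (∃ i, C₁.edge i = e) ∨ (∃ j, C₂.edge j = e) := by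
  constructor
  · rintro ⟨k, rfl⟩
    show (∃ i, C₁.edge i = gedge C₁ C₂ k) ∨ (∃ j, C₂.edge j = gedge C₁ C₂ k)
    unfold gedge
    by_cases h : k.1 < C₁.n
    · rw [dif_pos h]; exact Or.inl ⟨_, rfl⟩
    · rw [dif_neg h]; exact Or.inr ⟨_, rfl⟩
  · rintro (⟨i, rfl⟩ | ⟨j, rfl⟩)
    · refine ⟨(⟨i.1, by have := i.isLt; omega⟩ : Fin (C₁.n + C₂.n)), ?_⟩
      show gedge C₁ C₂ _ = _
      rw [gedge, dif_pos i.isLt]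
    · refine ⟨(⟨C₁.n + j.1, by have := j.isLt; omega⟩ : Fin (C₁.n + C₂.n)), ?_⟩
      show gedge C₁ C₂ _ = _
      rw [gedge, dif_neg (by simp)]
      congr 1
      exact Fin.ext (by simp)

lemma merge2 {V ι : Type} {E : ι → Finset V} (C₁ C₂ : CST E) (i₀ : Fin C₁.n) (j₀ : Fin C₂.n)
    (hv : C₁.vert i₀ = C₂.vert j₀) (hd : ∀ i j, C₁.edge i ≠ C₂.edge j) :
    ∃ C : CST E, ∀ e, (∃ k, C.edge k = e) ↔ (∃ i, C₁.edge i = e) ∨ (∃ j, C₂.edge j = e) := by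
  have h0 : (C₁.rot i₀).vert ⟨0, (C₁.rot i₀).pos⟩ = (C₂.rot j₀).vert ⟨0, (C₂.rot j₀).pos⟩ := by
    rw [rot_vert_zero, rot_vert_zero]; exact hv
  have hd' : ∀ i j, (C₁.rot i₀).edge i ≠ (C₂.rot j₀).edge j := fun i j => hd _ _
  refine ⟨glue (C₁.rot i₀) (C₂.rot j₀) h0 hd', fun e => ?_⟩
  rw [glue_edge_range, rot_edge_range, rot_edge_range]

lemma merge_family {V ι : Type} {E : ι → Finset V} :
    ∀ (m : ℕ) (T : Fin m → CST E) (C : CST E),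
    (∀ k k' i i', (T k).vert i = (T k').vert i' → k = k') →
    (∀ k k' i i', (T k).edge i = (T k').edge i' → k = k') →
    (∀ k i j, (T k).edge i ≠ C.edge j) →
    ∃ (m' : ℕ) (T' : Fin m' → CST E),
      (∀ e, ((∃ k i, (T k).edge i = e) ∨ (∃ j, C.edge j = e)) ↔ (∃ k i, (T' k).edge i = e)) ∧
      (∀ k k' i i', (T' k).edge i = (T' k').edge i' → k = k') ∧
      (∀ k k' i i', (T' k).vert i = (T' k').vert i' → k = k') := by
  intro m
  induction m with
  | zero =>
    intro T C _ _ _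
    refine ⟨1, fun _ => C, fun e => ?_, fun _ _ _ _ _ => Subsingleton.elim _ _,
      fun _ _ _ _ _ => Subsingleton.elim _ _⟩
    constructor
    · rintro (⟨k, _⟩ | ⟨j, hj⟩)
      · exact k.elim0
      · exact ⟨0, j, hj⟩
    · rintro ⟨_, j, hj⟩; exact Or.inr ⟨j, hj⟩
  | succ m ih =>
    intro T C hv he hd
    by_cases hsh : ∃ k i j, (T k).vert i = C.vert j
    · obtain ⟨k, i, j, hkij⟩ := hsh
      obtain ⟨C₂, hC₂⟩ := merge2 (T k) C i j hkij (fun i j => hd k i j)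
      set T'' : Fin m → CST E := fun l => T (k.succAbove l) with hT''
      have hv'' : ∀ l l' i i', (T'' l).vert i = (T'' l').vert i' → l = l' := by
        intro l l' i i' h
        exact Fin.succAbove_right_injective (hv _ _ _ _ h)
      have he'' : ∀ l l' i i', (T'' l).edge i = (T'' l').edge i' → l = l' := by
        intro l l' i i' h
        exact Fin.succAbove_right_injective (he _ _ _ _ h)
      have hd'' : ∀ l i j, (T'' l).edge i ≠ C₂.edge j := by
        intro l i' j' hcon
        rcases (hC₂ (C₂.edge j')).mp ⟨j', rfl⟩ with ⟨i'', hi''⟩ | ⟨j'', hj''⟩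
        · have h2 := he _ _ _ _ (hcon.trans hi''.symm)
          exact Fin.succAbove_ne k l h2
        · exact hd _ _ _ (hcon.trans hj''.symm)
      obtain ⟨m', T', hiff', he', hv'⟩ := ih T'' C₂ hv'' he'' hd''
      refine ⟨m', T', fun e => ?_, he', hv'⟩
      rw [← hiff' e]
      constructor
      · rintro (⟨k', i', hk'⟩ | hC)
        · by_cases hkk : k' = k
          · subst hkk
            exact Or.inr ((hC₂ e).mpr (Or.inl ⟨i', hk'⟩))
          · obtain ⟨l, hl⟩ := Fin.exists_succAbove_eq hkk
            subst hl
            exact Or.inl ⟨l, i', hk'⟩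
        · exact Or.inr ((hC₂ e).mpr (Or.inr hC))
      · rintro (⟨l, i', hl⟩ | hC2)
        · exact Or.inl ⟨k.succAbove l, i', hl⟩
        · rcases (hC₂ e).mp hC2 with ⟨i', hi'⟩ | hC
          · exact Or.inl ⟨k, i', hi'⟩
          · exact Or.inr hC
    · push_neg at hsh
      refine ⟨m + 2, Fin.cons C T, fun e => ?_, ?_, ?_⟩
      · constructor
        · rintro (⟨k, i, hk⟩ | ⟨j, hj⟩)
          · exact ⟨k.succ, i, hk⟩
          · exact ⟨0, j, hj⟩
        · rintro ⟨k, i, hk⟩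
          rcases Fin.eq_zero_or_eq_succ k with rfl | ⟨l, rfl⟩
          · exact Or.inr ⟨i, hk⟩
          · exact Or.inl ⟨l, i, hk⟩
      · intro k k' i i' h
        rcases Fin.eq_zero_or_eq_succ k with rfl | ⟨l, rfl⟩ <;>
          rcases Fin.eq_zero_or_eq_succ k' with rfl | ⟨l', rfl⟩
        · rfl
        · exact absurd h.symm (hd l' i' i)
        · exact absurd h (hd l i i')
        · exact congrArg Fin.succ (he l l' i i' h)
      · intro k k' i i' h
        rcases Fin.eq_zero_or_eq_succ k with rfl | ⟨l, rfl⟩ <;>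
          rcases Fin.eq_zero_or_eq_succ k' with rfl | ⟨l', rfl⟩
        · rfl
        · exact absurd h.symm (hsh l' i' i)
        · exact absurd h (hsh l i i')
        · exact congrArg Fin.succ (hv l l' i i' h)


section Walks
variable {V ι : Type} [DecidableEq V] [DecidableEq ι]

def IsWalk (a b : ι → V) (F : Finset ι) (t : ℕ) (f : ℕ → V) (g : ℕ → ι) : Prop :=
  (∀ i < t, g i ∈ F) ∧ (∀ i < t, ∀ j < t, g i = g j → i = j) ∧
  (∀ i < t, (f i = a (g i) ∧ f (i+1) = b (g i)) ∨ (f i = b (g i) ∧ f (i+1) = a (g i)))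

lemma walk_step_ne {a b : ι → V} {F : Finset ι} {t f g} (hab : ∀ e, a e ≠ b e)
    (hw : IsWalk a b F t f g) : ∀ i, i < t → f i ≠ f (i+1) := by
  intro i hi
  rcases hw.2.2 i hi with ⟨h1, h2⟩ | ⟨h1, h2⟩
  · rw [h1, h2]; exact hab _
  · rw [h1, h2]; exact (hab _).symm

lemma close_up {a b : ι → V} {F : Finset ι} {t f g} (hab : ∀ e, a e ≠ b e)
    (hw : IsWalk a b F t f g) (i0 : ℕ) (hi0 : i0 < t) (hrep : f i0 = f t) :
    ∃ C : CST (fun e => ({a e, b e} : Finset V)), ∀ i, C.edge i ∈ F := by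
  have hmem : ∀ i, i < t → f i ∈ ({a (g i), b (g i)} : Finset V) := by
    intro i hi
    rcases hw.2.2 i hi with ⟨h1, _⟩ | ⟨h1, _⟩ <;>
      simp [h1, Finset.mem_insert]
  have hmem' : ∀ i, i < t → f (i+1) ∈ ({a (g i), b (g i)} : Finset V) := by
    intro i hi
    rcases hw.2.2 i hi with ⟨_, h2⟩ | ⟨_, h2⟩ <;>
      simp [h2, Finset.mem_insert]
  have h2 : 2 ≤ t - i0 := by
    rcases Nat.lt_or_ge (t - i0) 2 with h | h
    · exfalso
      have ht : i0 + 1 = t := by omega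
      have hne := walk_step_ne hab hw i0 hi0
      rw [ht] at hne
      exact hne hrep
    · exact h
  refine ⟨⟨t - i0, h2, fun k => f (i0 + k.1), fun k => g (i0 + k.1), ?_, ?_, ?_, ?_⟩, ?_⟩
  case refine_5 =>
    intro i
    have hi : i.1 < t - i0 := i.isLt
    exact hw.1 (i0 + i.1) (by omega)
  · intro k
    exact hmem _ (by have := k.isLt; omega)
  · intro k
    have hk := k.isLt
    show f (i0 + (k.1 + 1) % (t - i0)) ∈ _
    by_cases h' : k.1 + 1 < t - i0
    · rw [Nat.mod_eq_of_lt h']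
      exact hmem' _ (by omega)
    · rw [show k.1 + 1 = t - i0 by omega, Nat.mod_self, Nat.add_zero, hrep]
      have hm := hmem' (i0 + k.1) (by omega)
      rw [show i0 + k.1 + 1 = t by omega] at hm
      exact hm
  · intro k
    have hk := k.isLt
    show f (i0 + k.1) ≠ f (i0 + (k.1 + 1) % (t - i0))
    by_cases h' : k.1 + 1 < t - i0
    · rw [Nat.mod_eq_of_lt h']
      have := walk_step_ne hab hw (i0 + k.1) (by omega)
      rwa [show i0 + k.1 + 1 = i0 + (k.1+1) by omega] at this
    · rw [show k.1 + 1 = t - i0 by omega, Nat.mod_self, Nat.add_zero, hrep]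
      have := walk_step_ne hab hw (i0 + k.1) (by omega)
      rwa [show i0 + k.1 + 1 = t by omega] at this
  · intro k k' h
    have hk := k.isLt; have hk' := k'.isLt
    have := hw.2.1 _ (by omega : i0 + k.1 < t) _ (by omega : i0 + k'.1 < t) h
    exact Fin.ext (by omega)

lemma fresh_edge {a b : ι → V} {F : Finset ι} {t f g} (hab : ∀ e, a e ≠ b e)
    (heven : ∀ v, Even ((F.filter fun e => a e = v).card + (F.filter fun e => b e = v).card))
    (hw : IsWalk a b F t f g) (ht : 1 ≤ t) (hfresh : ∀ i, i < t → f i ≠ f t) :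
    ∃ e ∈ F, (a e = f t ∨ b e = f t) ∧ e ∉ (Finset.range t).image g := by
  by_contra hall
  push_neg at hall
  set D := (Finset.range t).image g with hD
  have hDF : D ⊆ F := by
    intro e he
    obtain ⟨i, hi, rfl⟩ := Finset.mem_image.mp he
    exact hw.1 i (Finset.mem_range.mp hi)
  have hN : (F.filter fun e => a e = f t).card + (F.filter fun e => b e = f t).card
      = ∑ e ∈ F, ((if a e = f t then 1 else 0) + (if b e = f t then 1 else 0)) := by
    rw [Finset.sum_add_distrib, Finset.card_filter, Finset.card_filter]
  have hsub : ∑ e ∈ F, ((if a e = f t then 1 else 0) + (if b e = f t then 1 else 0))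
      = ∑ e ∈ D, ((if a e = f t then 1 else 0) + (if b e = f t then 1 else 0)) := by
    refine (Finset.sum_subset hDF ?_).symm
    intro e heF heD
    have : ¬(a e = f t ∨ b e = f t) := fun hor => heD (hall e heF hor)
    push_neg at this
    simp [this.1, this.2]
  have himg : ∑ e ∈ D, ((if a e = f t then 1 else 0) + (if b e = f t then 1 else 0))
      = ∑ i ∈ Finset.range t, ((if a (g i) = f t then 1 else 0) + (if b (g i) = f t then 1 else 0)) := by
    rw [hD]
    refine Finset.sum_image ?_
    intro i hi j hj hij
    exact hw.2.1 i (Finset.mem_range.mp hi) j (Finset.mem_range.mp hj) hij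
  have hstep : ∑ i ∈ Finset.range t, ((if a (g i) = f t then 1 else 0) + (if b (g i) = f t then 1 else 0))
      = ∑ i ∈ Finset.range t, ((if f i = f t then 1 else 0) + (if f (i+1) = f t then 1 else 0)) := by
    refine Finset.sum_congr rfl ?_
    intro i hi
    rcases hw.2.2 i (Finset.mem_range.mp hi) with ⟨h1, h2⟩ | ⟨h1, h2⟩
    · rw [h1, h2]
    · rw [h1, h2, Nat.add_comm]
  have hsum1 : ∑ i ∈ Finset.range t, (if f i = f t then 1 else 0) = 0 := by
    refine Finset.sum_eq_zero ?_
    intro i hi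
    simp [hfresh i (Finset.mem_range.mp hi)]
  have hsum2 : ∑ i ∈ Finset.range t, (if f (i+1) = f t then 1 else 0) = 1 := by
    rw [Finset.sum_eq_single_of_mem (t-1) (Finset.mem_range.mpr (by omega))]
    · rw [show t - 1 + 1 = t by omega, if_pos rfl]
    · intro i hi hne
      have hi' := Finset.mem_range.mp hi
      exact if_neg (hfresh (i+1) (by omega))
  have heq : (F.filter fun e => a e = f t).card + (F.filter fun e => b e = f t).card = 1 := by
    rw [hN, hsub, himg, hstep, Finset.sum_add_distrib, hsum1, hsum2]
  have := heven (f t)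
  rw [heq] at this
  exact (Nat.not_even_iff_odd.mpr odd_one) this

lemma extend_walk {a b : ι → V} {F : Finset ι} (hab : ∀ e, a e ≠ b e)
    (heven : ∀ v, Even ((F.filter fun e => a e = v).card + (F.filter fun e => b e = v).card)) :
    ∀ (d t : ℕ) (f : ℕ → V) (g : ℕ → ι), F.card ≤ t + d → 1 ≤ t → IsWalk a b F t f g →
    ∃ C : CST (fun e => ({a e, b e} : Finset V)), ∀ i, C.edge i ∈ F := by
  intro d
  induction d with
  | zero =>
    intro t f g hcard ht hw
    by_cases hrep : ∃ i, i < t ∧ f i = f t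
    · obtain ⟨i0, hi0, hr⟩ := hrep
      exact close_up hab hw i0 hi0 hr
    · exfalso
      push_neg at hrep
      obtain ⟨e, heF, _, heD⟩ := fresh_edge hab heven hw ht hrep
      have hDcard : ((Finset.range t).image g).card = t := by
        rw [Finset.card_image_of_injOn, Finset.card_range]
        intro i hi j hj hij
        exact hw.2.1 i (Finset.mem_range.mp hi) j (Finset.mem_range.mp hj) hij
      have : ((Finset.range t).image g) ⊂ F :=
        Finset.ssubset_iff_of_subset (by
          intro e' he'
          obtain ⟨i, hi, rfl⟩ := Finset.mem_image.mp he'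
          exact hw.1 i (Finset.mem_range.mp hi)) |>.mpr ⟨e, heF, heD⟩
      have := Finset.card_lt_card this
      omega
  | succ d ihd =>
    intro t f g hcard ht hw
    by_cases hrep : ∃ i, i < t ∧ f i = f t
    · obtain ⟨i0, hi0, hr⟩ := hrep
      exact close_up hab hw i0 hi0 hr
    · push_neg at hrep
      obtain ⟨e, heF, hinc, heD⟩ := fresh_edge hab heven hw ht hrep
      set f' : ℕ → V := fun i => if i = t + 1 then (if a e = f t then b e else a e) else f i with hf'
      set g' : ℕ → ι := fun i => if i = t then e else g i with hg'
      have hw' : IsWalk a b F (t+1) f' g' := by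
        refine ⟨?_, ?_, ?_⟩
        · intro i hi
          by_cases h : i = t
          · simp [hg', h, heF]
          · simp only [hg', if_neg h]
            exact hw.1 i (by omega)
        · intro i hi j hj hij
          by_cases h : i = t <;> by_cases h' : j = t
          · omega
          · exfalso
            rw [hg'] at hij
            simp only [if_pos h, if_neg h'] at hij
            exact heD (Finset.mem_image.mpr ⟨j, Finset.mem_range.mpr (by omega), hij.symm⟩)
          · exfalso
            rw [hg'] at hij
            simp only [if_neg h, if_pos h'] at hij
            exact heD (Finset.mem_image.mpr ⟨i, Finset.mem_range.mpr (by omega), hij⟩)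
          · rw [hg'] at hij
            simp only [if_neg h, if_neg h'] at hij
            exact hw.2.1 i (by omega) j (by omega) hij
        · intro i hi
          by_cases h : i = t
          · subst h
            have hft : f' i = f i := by
              simp only [hf']
              rw [if_neg (by omega)]
            have hgt : g' i = e := by simp [hg']
            have hft1 : f' (i+1) = if a e = f i then b e else a e := by
              simp only [hf']
              simp
            rw [hft, hgt, hft1]
            by_cases ha : a e = f i
            · left
              exact ⟨ha.symm, by rw [if_pos ha]⟩
            · right
              have hb : b e = f i := by tauto
              exact ⟨hb.symm, by rw [if_neg ha]⟩
          · have hi' : i < t := by omega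
            have e1 : f' i = f i := by simp [hf', show i ≠ t + 1 by omega]
            have e2 : f' (i+1) = f (i+1) := by simp [hf', show i + 1 ≠ t + 1 by omega, h]
            have e3 : g' i = g i := by simp [hg', h]
            rw [e1, e2, e3]
            exact hw.2.2 i hi'
      exact ihd (t+1) f' g' (by omega) (by omega) hw'

lemma find_cst {a b : ι → V} {F : Finset ι} (hab : ∀ e, a e ≠ b e)
    (heven : ∀ v, Even ((F.filter fun e => a e = v).card + (F.filter fun e => b e = v).card))
    (hF : F.Nonempty) :
    ∃ C : CST (fun e => ({a e, b e} : Finset V)), ∀ i, C.edge i ∈ F := by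
  obtain ⟨e₀, he₀⟩ := hF
  refine extend_walk hab heven F.card 1 (fun i => if i = 0 then a e₀ else b e₀) (fun _ => e₀)
    (by omega) le_rfl ⟨fun i _ => he₀, fun i hi j hj _ => by omega, ?_⟩
  intro i hi
  have : i = 0 := by omega
  subst this
  left
  exact ⟨if_pos rfl, if_neg one_ne_zero⟩
end Walks


section LemB
variable {V ι : Type} [DecidableEq V] [DecidableEq ι]

lemma card_vert_nxt {E : ι → Finset V} (C : CST E) (v : V) :
    ((univ : Finset (Fin C.n)).filter fun i => C.vert (nxt i) = v).card
      = ((univ : Finset (Fin C.n)).filter fun i => C.vert i = v).card := by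
  refine Finset.card_bij (fun i _ => nxt i) ?_ ?_ ?_
  · intro i hi
    simp only [Finset.mem_filter, Finset.mem_univ, true_and] at hi ⊢
    exact hi
  · intro i _ j _ h
    exact nxt_inj h
  · intro j hj
    simp only [Finset.mem_filter, Finset.mem_univ, true_and] at hj
    exact ⟨prv j, by simp only [Finset.mem_filter, Finset.mem_univ, true_and, nxt_prv]; exact hj,
      nxt_prv j⟩

lemma cst_parity {a b : ι → V} (hab : ∀ e, a e ≠ b e)
    (C : CST (fun e => ({a e, b e} : Finset V))) (v : V) :
    Even ((((univ : Finset (Fin C.n)).image C.edge).filter fun e => a e = v).card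
      + (((univ : Finset (Fin C.n)).image C.edge).filter fun e => b e = v).card) := by
  rw [Finset.filter_image, Finset.filter_image,
    Finset.card_image_of_injective _ C.edge_inj, Finset.card_image_of_injective _ C.edge_inj]
  have key : ((univ : Finset (Fin C.n)).filter fun i => a (C.edge i) = v).card
      + ((univ : Finset (Fin C.n)).filter fun i => b (C.edge i) = v).card
      = ((univ : Finset (Fin C.n)).filter fun i => C.vert i = v).card
      + ((univ : Finset (Fin C.n)).filter fun i => C.vert (nxt i) = v).card := by
    rw [Finset.card_filter, Finset.card_filter, Finset.card_filter, Finset.card_filter,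
      ← Finset.sum_add_distrib, ← Finset.sum_add_distrib]
    refine Finset.sum_congr rfl ?_
    intro i _
    have hl := C.mem_left i
    have hr := C.mem_right i
    have hne := C.ne_next i
    simp only [Finset.mem_insert, Finset.mem_singleton] at hl hr
    rcases hl with h1 | h1 <;> rcases hr with h2 | h2
    · exact absurd (h1.trans h2.symm) hne
    · rw [h1, h2]
    · rw [h1, h2, Nat.add_comm]
    · exact absurd (h1.trans h2.symm) hne
  rw [key, card_vert_nxt]
  exact ⟨_, rfl⟩

lemma deg_split (F D : Finset ι) (hDF : D ⊆ F) (p : ι → Prop) [DecidablePred p] :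
    (F.filter p).card = ((F \ D).filter p).card + (D.filter p).card := by
  conv_lhs => rw [← Finset.sdiff_union_of_subset hDF]
  rw [Finset.filter_union]
  exact Finset.card_union_of_disjoint
    (Finset.disjoint_filter_filter Finset.sdiff_disjoint)

lemma lemB (a b : ι → V) (hab : ∀ e, a e ≠ b e) :
    ∀ (F : Finset ι),
    (∀ v, Even ((F.filter fun e => a e = v).card + (F.filter fun e => b e = v).card)) →
    ∃ (m : ℕ) (T : Fin m → CST (fun e => ({a e, b e} : Finset V))),
      (∀ e ∈ F, ∃ k i, (T k).edge i = e) ∧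
      (∀ k i, (T k).edge i ∈ F) ∧
      (∀ k k' i i', (T k).edge i = (T k').edge i' → k = k') ∧
      (∀ k k' i i', (T k).vert i = (T k').vert i' → k = k') := by
  intro F
  induction F using Finset.strongInduction with
  | _ F ih =>
    intro heven
    by_cases hF : F.Nonempty
    · obtain ⟨C, hCF⟩ := find_cst hab heven hF
      set D := (univ : Finset (Fin C.n)).image C.edge with hD
      have hDF : D ⊆ F := by
        intro e he
        obtain ⟨i, _, rfl⟩ := Finset.mem_image.mp he
        exact hCF i
      have hDne : D.Nonempty := ⟨C.edge ⟨0, C.pos⟩, Finset.mem_image_of_mem _ (mem_univ _)⟩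
      have hss : F \ D ⊂ F := by
        refine Finset.sdiff_ssubset hDF hDne
      have heven' : ∀ v, Even (((F \ D).filter fun e => a e = v).card
          + ((F \ D).filter fun e => b e = v).card) := by
        intro v
        have h0 := heven v
        rw [deg_split F D hDF (fun e => a e = v), deg_split F D hDF (fun e => b e = v)] at h0
        have hDp := cst_parity hab C v
        rw [← hD] at hDp
        rcases hDp with ⟨x, hx⟩
        rcases h0 with ⟨y, hy⟩
        exact ⟨y - x, by omega⟩
      obtain ⟨m, T, hcov, hFsub, he, hv⟩ := ih (F \ D) hss heven'
      have hd : ∀ k i j, (T k).edge i ≠ C.edge j := by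
        intro k i j hcon
        have h1 := hFsub k i
        rw [hcon] at h1
        have h2 : C.edge j ∈ D := Finset.mem_image_of_mem _ (mem_univ _)
        exact (Finset.mem_sdiff.mp h1).2 h2
      obtain ⟨m', T', hiff, he', hv'⟩ := merge_family m T C hv he hd
      refine ⟨m', T', ?_, ?_, he', hv'⟩
      · intro e heF
        by_cases heD : e ∈ D
        · obtain ⟨i, _, rfl⟩ := Finset.mem_image.mp heD
          exact (hiff _).mp (Or.inr ⟨i, rfl⟩)
        · obtain ⟨k, i, hki⟩ := hcov e (Finset.mem_sdiff.mpr ⟨heF, heD⟩)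
          exact (hiff _).mp (Or.inl ⟨k, i, hki⟩)
      · intro k i
        rcases (hiff ((T' k).edge i)).mpr ⟨k, i, rfl⟩ with ⟨k', i', hk'⟩ | ⟨j, hj⟩
        · have h1 := hFsub k' i'
          rw [hk'] at h1
          exact (Finset.mem_sdiff.mp h1).1
        · rw [← hj]
          exact hCF j
    · rw [Finset.not_nonempty_iff_eq_empty] at hF
      subst hF
      exact ⟨0, Fin.elim0, fun e he => absurd he (Finset.notMem_empty e),
        fun k => k.elim0, fun k => k.elim0, fun k => k.elim0⟩
end LemB


section Final
variable {V ι : Type}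

lemma prv_nxt {n : ℕ} (i : Fin n) : prv (nxt i) = i :=
  nxt_inj (nxt_prv (nxt i))

def CST.mono {E₁ E₂ : ι → Finset V} (h : ∀ e, E₁ e ⊆ E₂ e) (C : CST E₁) : CST E₂ where
  n := C.n
  hn := C.hn
  vert := C.vert
  edge := C.edge
  mem_left i := h _ (C.mem_left i)
  mem_right i := h _ (C.mem_right i)
  ne_next := C.ne_next
  edge_inj := C.edge_inj


-- forward direction
lemma forward_dir [Fintype ι] [DecidableEq V] [DecidableEq ι] (E : ι → Finset V)
    (h : HasEulerFamily E) :
    ∃ S : Finset (V × ι),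
      (∀ p ∈ S, p.1 ∈ E p.2) ∧
      (∀ v : V, Even ((S.filter fun p => p.1 = v).card)) ∧
      (∀ e : ι, (S.filter fun p => p.2 = e).card = 2) := by
  obtain ⟨m, T, hcov, hedge, hvert⟩ := h
  set F1 : (Σ k : Fin m, Fin (T k).n) → V × ι :=
    fun x => ((T x.1).vert x.2, (T x.1).edge x.2) with hF1
  set F2 : (Σ k : Fin m, Fin (T k).n) → V × ι :=
    fun x => ((T x.1).vert (nxt x.2), (T x.1).edge x.2) with hF2
  have uniq : ∀ (x y : Σ k : Fin m, Fin (T k).n),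
      (T x.1).edge x.2 = (T y.1).edge y.2 → x = y := by
    rintro ⟨k, i⟩ ⟨k', i'⟩ h
    obtain rfl := hedge k k' i i' h
    obtain rfl := (T k).edge_inj h
    rfl
  have hF1inj : Function.Injective F1 := by
    intro x y hxy
    exact uniq x y (congrArg Prod.snd hxy)
  have hF2inj : Function.Injective F2 := by
    intro x y hxy
    exact uniq x y (congrArg Prod.snd hxy)
  refine ⟨univ.image F1 ∪ univ.image F2, ?_, ?_, ?_⟩
  · intro p hp
    rcases Finset.mem_union.mp hp with hp | hp
    · obtain ⟨x, _, rfl⟩ := Finset.mem_image.mp hp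
      exact (T x.1).mem_left x.2
    · obtain ⟨x, _, rfl⟩ := Finset.mem_image.mp hp
      exact (T x.1).mem_right x.2
  · intro v
    rw [Finset.filter_union, Finset.filter_image, Finset.filter_image]
    have hdisj : Disjoint (((univ : Finset _).filter fun x => (F1 x).1 = v).image F1)
        (((univ : Finset _).filter fun x => (F2 x).1 = v).image F2) := by
      rw [Finset.disjoint_left]
      rintro p hp1 hp2
      obtain ⟨x, _, rfl⟩ := Finset.mem_image.mp hp1
      obtain ⟨y, _, hy⟩ := Finset.mem_image.mp hp2
      obtain rfl := uniq y x (congrArg Prod.snd hy)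
      have := congrArg Prod.fst hy
      exact (T y.1).ne_next y.2 this.symm
    rw [Finset.card_union_of_disjoint hdisj, Finset.card_image_of_injective _ hF1inj,
      Finset.card_image_of_injective _ hF2inj]
    have hBA : ((univ : Finset _).filter fun x => (F2 x).1 = v).card
          = ((univ : Finset _).filter fun x => (F1 x).1 = v).card := by
        refine Finset.card_bij (fun x _ => ⟨x.1, nxt x.2⟩) ?_ ?_ ?_
        · rintro ⟨k, i⟩ hx
          simp only [Finset.mem_filter, Finset.mem_univ, true_and, hF1, hF2] at hx ⊢
          exact hx
        · rintro ⟨k, i⟩ _ ⟨k', i'⟩ _ hxy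
          obtain ⟨rfl, h2⟩ := Sigma.mk.inj_iff.mp hxy
          obtain rfl := nxt_inj (eq_of_heq h2)
          rfl
        · rintro ⟨k, i⟩ hx
          simp only [Finset.mem_filter, Finset.mem_univ, true_and, hF1, hF2] at hx ⊢
          refine ⟨⟨k, prv i⟩, ?_, ?_⟩
          · simpa [nxt_prv] using hx
          · simp [nxt_prv]
    rw [hBA]
    exact ⟨_, rfl⟩
  · intro e
    obtain ⟨k, i, hki⟩ := hcov e
    have hset : ((univ.image F1 ∪ univ.image F2).filter fun p => p.2 = e)
        = {((T k).vert i, e), ((T k).vert (nxt i), e)} := by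
      ext p
      simp only [Finset.mem_filter, Finset.mem_union, Finset.mem_image, Finset.mem_univ,
        true_and, Finset.mem_insert, Finset.mem_singleton]
      constructor
      · rintro ⟨⟨x, rfl⟩ | ⟨x, rfl⟩, hpe⟩
        · obtain rfl := uniq x ⟨k, i⟩ (by rw [hki]; exact hpe)
          left
          simp only [hF1]
          exact Prod.ext rfl hki
        · obtain rfl := uniq x ⟨k, i⟩ (by rw [hki]; exact hpe)
          right
          simp only [hF2]
          exact Prod.ext rfl hki
      · rintro (rfl | rfl)
        · exact ⟨Or.inl ⟨⟨k, i⟩, Prod.ext rfl hki⟩, rfl⟩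
        · exact ⟨Or.inr ⟨⟨k, i⟩, Prod.ext rfl hki⟩, rfl⟩
    rw [hset, Finset.card_insert_of_notMem, Finset.card_singleton]
    simp only [Finset.mem_singleton, Prod.mk.injEq]
    intro hcon
    exact (T k).ne_next i hcon.1

lemma pair_filter_card [DecidableEq V] [DecidableEq ι] (x y : V) (hxy : x ≠ y) (e : ι) (v : V) :
    ((({(x, e), (y, e)} : Finset (V × ι))).filter fun p => p.1 = v).card
      = (if x = v then 1 else 0) + (if y = v then 1 else 0) := by
  have hne : (x, e) ≠ (y, e) := by
    intro hc
    exact hxy (congrArg Prod.fst hc)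
  by_cases hx : x = v <;> by_cases hy : y = v
  · exact absurd (hx.trans hy.symm) hxy
  · rw [Finset.filter_insert, if_pos hx, Finset.filter_singleton, if_neg hy]
    simp [hx, hy]
  · rw [Finset.filter_insert, if_neg hx, Finset.filter_singleton, if_pos hy]
    simp [hx, hy]
  · rw [Finset.filter_insert, if_neg hx, Finset.filter_singleton, if_neg hy]
    simp [hx, hy]

lemma backward_dir [Fintype ι] [DecidableEq V] [DecidableEq ι] (E : ι → Finset V)
    (h : ∃ S : Finset (V × ι),
      (∀ p ∈ S, p.1 ∈ E p.2) ∧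
      (∀ v : V, Even ((S.filter fun p => p.1 = v).card)) ∧
      (∀ e : ι, (S.filter fun p => p.2 = e).card = 2)) :
    HasEulerFamily E := by
  obtain ⟨S, h1, h2, h3⟩ := h
  have hex : ∀ e : ι, ∃ x y : V, x ≠ y ∧
      S.filter (fun p => p.2 = e) = {(x, e), (y, e)} := by
    intro e
    obtain ⟨p, q, hpq, hfil⟩ := Finset.card_eq_two.mp (h3 e)
    have hp : p ∈ S.filter (fun p => p.2 = e) := by
      rw [hfil]; exact Finset.mem_insert_self _ _
    have hq : q ∈ S.filter (fun p => p.2 = e) := by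
      rw [hfil]; exact Finset.mem_insert.mpr (Or.inr (Finset.mem_singleton_self _))
    have hp2 : p.2 = e := (Finset.mem_filter.mp hp).2
    have hq2 : q.2 = e := (Finset.mem_filter.mp hq).2
    refine ⟨p.1, q.1, ?_, ?_⟩
    · intro hc
      exact hpq (Prod.ext hc (hp2.trans hq2.symm))
    · have e1 : ((p.1 : V), e) = p := by rw [← hp2]
      have e2 : ((q.1 : V), e) = q := by rw [← hq2]
      rw [hfil, e1, e2]
  choose A B hAB hSfil using hex
  have hApair : ∀ e, (A e, e) ∈ S := by
    intro e
    have : (A e, e) ∈ S.filter (fun p => p.2 = e) := by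
      rw [hSfil e]; exact Finset.mem_insert_self _ _
    exact (Finset.mem_filter.mp this).1
  have hBpair : ∀ e, (B e, e) ∈ S := by
    intro e
    have : (B e, e) ∈ S.filter (fun p => p.2 = e) := by
      rw [hSfil e]; exact Finset.mem_insert.mpr (Or.inr (Finset.mem_singleton_self _))
    exact (Finset.mem_filter.mp this).1
  have hSeq : S = (univ : Finset ι).biUnion (fun e => ({(A e, e), (B e, e)} : Finset (V × ι))) := by
    ext p
    simp only [Finset.mem_biUnion, Finset.mem_univ, true_and]
    constructor
    · intro hp
      refine ⟨p.2, ?_⟩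
      have hmem : p ∈ S.filter (fun q => q.2 = p.2) := Finset.mem_filter.mpr ⟨hp, rfl⟩
      rw [hSfil p.2] at hmem
      exact hmem
    · rintro ⟨e, hp⟩
      rcases Finset.mem_insert.mp hp with rfl | hp'
      · exact hApair e
      · rw [Finset.mem_singleton.mp hp']
        exact hBpair e
  have hdeg : ∀ v, ((univ : Finset ι).filter fun e => A e = v).card
      + ((univ : Finset ι).filter fun e => B e = v).card
      = (S.filter fun p => p.1 = v).card := by
    intro v
    rw [hSeq, Finset.filter_biUnion, Finset.card_biUnion]
    · rw [Finset.card_filter, Finset.card_filter, ← Finset.sum_add_distrib]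
      refine Finset.sum_congr rfl ?_
      intro e _
      exact (pair_filter_card (A e) (B e) (hAB e) e v).symm
    · intro x _ y _ hxy
      rw [Function.onFun, Finset.disjoint_left]
      rintro p hp1 hp2
      have hx : p.2 = x := by
        rcases Finset.mem_insert.mp (Finset.mem_of_mem_filter _ hp1) with rfl | hp'
        · rfl
        · rw [Finset.mem_singleton.mp hp']
      have hy : p.2 = y := by
        rcases Finset.mem_insert.mp (Finset.mem_of_mem_filter _ hp2) with rfl | hp'
        · rfl
        · rw [Finset.mem_singleton.mp hp']
      exact hxy (hx.symm.trans hy)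
  have heven : ∀ v, Even (((univ : Finset ι).filter fun e => A e = v).card
      + ((univ : Finset ι).filter fun e => B e = v).card) := by
    intro v
    rw [hdeg v]
    exact h2 v
  obtain ⟨m, T, hcov, hsub, he, hv⟩ := lemB A B hAB univ heven
  have hE : ∀ e, ({A e, B e} : Finset V) ⊆ E e := by
    intro e
    intro x hx
    rcases Finset.mem_insert.mp hx with rfl | hx'
    · exact h1 _ (hApair e)
    · rw [Finset.mem_singleton.mp hx']
      exact h1 _ (hBpair e)
  refine ⟨m, fun k => (T k).mono hE, ?_, ?_, ?_⟩
  · intro e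
    obtain ⟨k, i, hki⟩ := hcov e (Finset.mem_univ e)
    exact ⟨k, i, hki⟩
  · intro k k' i i' hh
    exact he k k' i i' hh
  · intro k k' i i' hh
    exact hv k k' i i' hh
end Final


/-- A connected hypergraph `H = (V,E)` (with nonempty edges) admits an
Euler family if and only if its incidence graph has a subgraph (given by a subset `S`
of the incidence pairs, i.e. flags) in which every vertex of `V` has even degree and
every vertex of `E` has degree exactly 2. -/
theorem stmt14 {V ι : Type} [Fintype V] [Fintype ι] [DecidableEq V] [DecidableEq ι]
    [Nonempty V] (E : ι → Finset V)
    (hne : ∀ e, (E e).Nonempty) (hconn : (skeleton E).Connected) :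
    HasEulerFamily E ↔
      ∃ S : Finset (V × ι),
        (∀ p ∈ S, p.1 ∈ E p.2) ∧
        (∀ v : V, Even ((S.filter fun p => p.1 = v).card)) ∧
        (∀ e : ι, (S.filter fun p => p.2 = e).card = 2) := by
  constructor
  · exact fun h => forward_dir E h
  · exact fun h => backward_dir E h
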